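/- The function Φ : (0,∞) → ℝ defined by Φ(s) = √s · coth(1/√s) is increasing and concave on (0,∞), and satisfies √s ≤ Φ(s) ≤ √s + s for all s > 0. -/

import Mathlib

noncomputable section

/-- The Falk–Bruch function `Φ(s) = √s coth(1/√s)`. -/
def PhiFB (s : ℝ) : ℝ :=
  Real.sqrt s * (Real.cosh (1 / Real.sqrt s) / Real.sinh (1 / Real.sqrt s))

namespace PhiFBAux

/-- first derivative of `PhiFB` -/
def D1 (s : ℝ) : ℝ :=
  (Real.sqrt s * Real.sinh (1 / Real.sqrt s) * Real.cosh (1 / Real.sqrt s) + 1) /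
    (2 * s * Real.sinh (1 / Real.sqrt s) ^ 2)

/-- second derivative of `PhiFB` -/
def D2 (s : ℝ) : ℝ :=
  -(Real.sinh (1 / Real.sqrt s) *
      (Real.sqrt s * Real.sinh (1 / Real.sqrt s) +
        s * Real.sinh (1 / Real.sqrt s) ^ 2 * Real.cosh (1 / Real.sqrt s) -
        2 * Real.cosh (1 / Real.sqrt s))) /
    (Real.sqrt s * (2 * s * Real.sinh (1 / Real.sqrt s) ^ 2) ^ 2)

lemma nonneg_of_deriv {f f' : ℝ → ℝ} (hf : ∀ x, HasDerivAt f (f' x) x)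
    (hf0 : f 0 = 0) (h' : ∀ x, 0 ≤ x → 0 ≤ f' x) {x : ℝ} (hx : 0 ≤ x) : 0 ≤ f x := by
  have hm : MonotoneOn f (Set.Ici 0) := by
    refine monotoneOn_of_deriv_nonneg (convex_Ici 0)
      (fun y _ => (hf y).continuousAt.continuousWithinAt)
      (fun y _ => (hf y).differentiableAt.differentiableWithinAt) (fun y hy => ?_)
    rw [interior_Ici, Set.mem_Ioi] at hy
    rw [(hf y).deriv]
    exact h' y hy.le
  have := hm Set.self_mem_Ici (Set.mem_Ici.2 hx) hx
  rwa [hf0] at this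

lemma cosh_lb {x : ℝ} (hx : 0 ≤ x) : 1 + x ^ 2 / 2 ≤ Real.cosh x := by
  have key : 0 ≤ Real.cosh x - (1 + x ^ 2 / 2) := by
    refine nonneg_of_deriv (f := fun y => Real.cosh y - (1 + y ^ 2 / 2))
      (f' := fun y => Real.sinh y - y) (fun y => ?_) (by norm_num)
      (fun y hy => by simpa using Real.self_le_sinh_iff.mpr hy) hx
    have h := (Real.hasDerivAt_cosh y).sub (((hasDerivAt_pow 2 y).div_const 2).const_add 1)
    exact h.congr_deriv (by norm_num)
  linarith

lemma sinh_lb {x : ℝ} (hx : 0 ≤ x) : x + x ^ 3 / 6 ≤ Real.sinh x := by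
  have key : 0 ≤ Real.sinh x - (x + x ^ 3 / 6) := by
    refine nonneg_of_deriv (f := fun y => Real.sinh y - (y + y ^ 3 / 6))
      (f' := fun y => Real.cosh y - (1 + y ^ 2 / 2)) (fun y => ?_)
      (by norm_num) (fun y hy => by simpa using cosh_lb hy) hx
    have h := (Real.hasDerivAt_sinh y).sub ((hasDerivAt_id y).add ((hasDerivAt_pow 3 y).div_const 6))
    exact h.congr_deriv (by norm_num; ring)
  linarith

lemma self_cosh_lb {x : ℝ} (hx : 0 ≤ x) : Real.sinh x ≤ x * Real.cosh x := by
  have key : 0 ≤ x * Real.cosh x - Real.sinh x := by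
    refine nonneg_of_deriv (f := fun y => y * Real.cosh y - Real.sinh y)
      (f' := fun y => y * Real.sinh y) (fun y => ?_) (by norm_num)
      (fun y hy => mul_nonneg hy (Real.sinh_nonneg_iff.mpr hy)) hx
    have h := (((hasDerivAt_id y).mul (Real.hasDerivAt_cosh y))).sub (Real.hasDerivAt_sinh y)
    exact h.congr_deriv (by simp)
  linarith

lemma tanh_lb {x : ℝ} (hx : 0 ≤ x) : (x - x ^ 3 / 3) * Real.cosh x ≤ Real.sinh x := by
  have key : 0 ≤ Real.sinh x - (x - x ^ 3 / 3) * Real.cosh x := by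
    refine nonneg_of_deriv (f := fun y => Real.sinh y - (y - y ^ 3 / 3) * Real.cosh y)
      (f' := fun y => Real.cosh y -
        ((1 - 3 * y ^ 2 / 3) * Real.cosh y + (y - y ^ 3 / 3) * Real.sinh y))
      (fun y => ?_) (by norm_num) (fun y hy => ?_) hx
    · have h := (Real.hasDerivAt_sinh y).sub
        ((((hasDerivAt_id y).sub ((hasDerivAt_pow 3 y).div_const 3)).mul
          (Real.hasDerivAt_cosh y)))
      exact h.congr_deriv (by norm_num)
    · have h1 := self_cosh_lb hy
      have h2 : 0 ≤ Real.sinh y := Real.sinh_nonneg_iff.mpr hy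
      have h3 : 0 < Real.cosh y := Real.cosh_pos y
      nlinarith [mul_nonneg hy (sub_nonneg.mpr h1), mul_nonneg (pow_nonneg hy 3) h2]
  linarith

lemma key_ineq {t : ℝ} (ht : 0 ≤ t) :
    2 * t ^ 2 * Real.cosh t ≤ Real.sinh t ^ 2 * Real.cosh t + t * Real.sinh t := by
  have h1 := sinh_lb ht
  have h2 := tanh_lb ht
  have hc := Real.cosh_pos t
  have hs0 : 0 ≤ Real.sinh t := Real.sinh_nonneg_iff.mpr ht
  have hA : 0 ≤ t + t ^ 3 / 6 := by positivity
  have hsq : (t + t ^ 3 / 6) ^ 2 ≤ Real.sinh t ^ 2 := by nlinarith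
  have h5 : (t + t ^ 3 / 6) ^ 2 * Real.cosh t ≤ Real.sinh t ^ 2 * Real.cosh t :=
    mul_le_mul_of_nonneg_right hsq hc.le
  have h6 : t * ((t - t ^ 3 / 3) * Real.cosh t) ≤ t * Real.sinh t :=
    mul_le_mul_of_nonneg_left h2 ht
  have h7 : 2 * t ^ 2 ≤ (t + t ^ 3 / 6) ^ 2 + t * (t - t ^ 3 / 3) := by nlinarith [pow_nonneg ht 6]
  have h8 := mul_le_mul_of_nonneg_right h7 hc.le
  nlinarith [h5, h6, h8]

lemma hasDerivAt_phi {s : ℝ} (hs : 0 < s) : HasDerivAt PhiFB (D1 s) s := by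
  have ha : 0 < Real.sqrt s := Real.sqrt_pos.mpr hs
  have ha2 : Real.sqrt s ^ 2 = s := Real.sq_sqrt hs.le
  have hu0 : 0 < 1 / Real.sqrt s := by positivity
  have hshpos : 0 < Real.sinh (1 / Real.sqrt s) := Real.sinh_pos_iff.mpr hu0
  have hsq : HasDerivAt Real.sqrt (1 / (2 * Real.sqrt s)) s := Real.hasDerivAt_sqrt hs.ne'
  have hu : HasDerivAt (fun x => 1 / Real.sqrt x) (-(1 / (2 * Real.sqrt s)) / s) s := by
    have := hsq.inv ha.ne'
    rw [ha2] at this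
    simpa [one_div, Pi.inv_def] using this
  have hcosh := hu.cosh
  have hsinh := hu.sinh
  have h := (hsq.mul hcosh).div hsinh hshpos.ne'
  have hfun : PhiFB = fun x =>
      Real.sqrt x * Real.cosh (1 / Real.sqrt x) / Real.sinh (1 / Real.sqrt x) := by
    funext x; simp [PhiFB, mul_div_assoc]
  rw [hfun]
  refine h.congr_deriv (Eq.symm ?_)
  simp only [Pi.mul_apply, Pi.pow_apply, id]
  unfold D1
  have hc2 : Real.cosh (1 / Real.sqrt s) ^ 2 = Real.sinh (1 / Real.sqrt s) ^ 2 + 1 :=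
    Real.cosh_sq _
  set a := Real.sqrt s with hadef
  set sh := Real.sinh (1 / a)
  set c := Real.cosh (1 / a)
  rw [← ha2]
  field_simp
  linear_combination (-1) * hc2

lemma hasDerivAt_D1 {s : ℝ} (hs : 0 < s) : HasDerivAt D1 (D2 s) s := by
  have ha : 0 < Real.sqrt s := Real.sqrt_pos.mpr hs
  have ha2 : Real.sqrt s ^ 2 = s := Real.sq_sqrt hs.le
  have hu0 : 0 < 1 / Real.sqrt s := by positivity
  have hshpos : 0 < Real.sinh (1 / Real.sqrt s) := Real.sinh_pos_iff.mpr hu0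
  have hsq : HasDerivAt Real.sqrt (1 / (2 * Real.sqrt s)) s := Real.hasDerivAt_sqrt hs.ne'
  have hu : HasDerivAt (fun x => 1 / Real.sqrt x) (-(1 / (2 * Real.sqrt s)) / s) s := by
    have := hsq.inv ha.ne'
    rw [ha2] at this
    simpa [one_div, Pi.inv_def] using this
  have hcosh := hu.cosh
  have hsinh := hu.sinh
  have hN := ((hsq.mul hsinh).mul hcosh).add_const 1
  have hM := ((hasDerivAt_id s).const_mul 2).mul (hsinh.pow 2)
  have hMne : 2 * s * Real.sinh (1 / Real.sqrt s) ^ 2 ≠ 0 := by positivity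
  have h := hN.div hM hMne
  unfold D1 D2
  refine h.congr_deriv (Eq.symm ?_)
  simp only [Pi.mul_apply, Pi.pow_apply, id]
  have hc2 : Real.cosh (1 / Real.sqrt s) ^ 2 = Real.sinh (1 / Real.sqrt s) ^ 2 + 1 :=
    Real.cosh_sq _
  set a := Real.sqrt s with hadef
  set sh := Real.sinh (1 / a)
  set c := Real.cosh (1 / a)
  rw [← ha2]
  field_simp
  linear_combination (-a * sh ^ 2) * hc2

lemma D1_pos {s : ℝ} (hs : 0 < s) : 0 < D1 s := by
  have ha : 0 < Real.sqrt s := Real.sqrt_pos.mpr hs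
  have hu0 : 0 < 1 / Real.sqrt s := by positivity
  have hsh : 0 < Real.sinh (1 / Real.sqrt s) := Real.sinh_pos_iff.mpr hu0
  have hc : 0 < Real.cosh (1 / Real.sqrt s) := Real.cosh_pos _
  unfold D1
  apply div_pos
  · nlinarith [mul_pos (mul_pos ha hsh) hc]
  · have : 0 < 2 * s := by linarith
    exact mul_pos this (pow_pos hsh 2)

lemma D2_nonpos {s : ℝ} (hs : 0 < s) : D2 s ≤ 0 := by
  have ha : 0 < Real.sqrt s := Real.sqrt_pos.mpr hs
  have ha2 : Real.sqrt s ^ 2 = s := Real.sq_sqrt hs.le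
  have hu0 : 0 < 1 / Real.sqrt s := by positivity
  have hsh : 0 < Real.sinh (1 / Real.sqrt s) := Real.sinh_pos_iff.mpr hu0
  have hkey := mul_le_mul_of_nonneg_left (key_ineq hu0.le) hs.le
  have hane : Real.sqrt s ≠ 0 := ha.ne'
  have e1 : s * (2 * (1 / Real.sqrt s) ^ 2 * Real.cosh (1 / Real.sqrt s)) =
      2 * Real.cosh (1 / Real.sqrt s) := by
    rw [← ha2]; field_simp
    rw [Real.sqrt_sq ha.le]
  have e2 : s * (Real.sinh (1 / Real.sqrt s) ^ 2 * Real.cosh (1 / Real.sqrt s) +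
      1 / Real.sqrt s * Real.sinh (1 / Real.sqrt s)) =
      s * Real.sinh (1 / Real.sqrt s) ^ 2 * Real.cosh (1 / Real.sqrt s) +
      Real.sqrt s * Real.sinh (1 / Real.sqrt s) := by
    rw [← ha2]; field_simp
    rw [Real.sqrt_sq ha.le]
    ring
  have hX : 0 ≤ Real.sqrt s * Real.sinh (1 / Real.sqrt s) +
      s * Real.sinh (1 / Real.sqrt s) ^ 2 * Real.cosh (1 / Real.sqrt s) -
      2 * Real.cosh (1 / Real.sqrt s) := by
    rw [e1, e2] at hkey; linarith
  unfold D2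
  rw [neg_div]
  refine neg_nonpos.mpr (div_nonneg (mul_nonneg hsh.le hX) ?_)
  positivity

end PhiFBAux

open PhiFBAux in
theorem stmt19 :
    StrictMonoOn PhiFB (Set.Ioi 0) ∧
    ConcaveOn ℝ (Set.Ioi 0) PhiFB ∧
    ∀ s : ℝ, 0 < s → Real.sqrt s ≤ PhiFB s ∧ PhiFB s ≤ Real.sqrt s + s := by
  have hcont : ContinuousOn PhiFB (Set.Ioi 0) := fun x hx =>
    (hasDerivAt_phi (Set.mem_Ioi.mp hx)).continuousAt.continuousWithinAt
  refine ⟨?_, ?_, ?_⟩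
  · refine strictMonoOn_of_hasDerivWithinAt_pos (f' := D1) (convex_Ioi 0) hcont
      (fun x hx => ?_) (fun x hx => ?_)
    · rw [interior_Ioi] at hx
      exact (hasDerivAt_phi (Set.mem_Ioi.mp hx)).hasDerivWithinAt
    · rw [interior_Ioi] at hx
      exact D1_pos (Set.mem_Ioi.mp hx)
  · refine concaveOn_of_hasDerivWithinAt2_nonpos (f' := D1) (f'' := D2) (convex_Ioi 0) hcont
      (fun x hx => ?_) (fun x hx => ?_) (fun x hx => ?_) <;> rw [interior_Ioi] at hx
    · exact (hasDerivAt_phi (Set.mem_Ioi.mp hx)).hasDerivWithinAt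
    · exact (hasDerivAt_D1 (Set.mem_Ioi.mp hx)).hasDerivWithinAt
    · exact D2_nonpos (Set.mem_Ioi.mp hx)
  · intro s hs
    have ha : 0 < Real.sqrt s := Real.sqrt_pos.mpr hs
    have ha2 : Real.sqrt s ^ 2 = s := Real.sq_sqrt hs.le
    have hu0 : 0 < 1 / Real.sqrt s := by positivity
    have hsh : 0 < Real.sinh (1 / Real.sqrt s) := Real.sinh_pos_iff.mpr hu0
    constructor
    · have hexp := Real.exp_pos (-(1 / Real.sqrt s))
      rw [← Real.cosh_sub_sinh] at hexp
      have h2 : 1 ≤ Real.cosh (1 / Real.sqrt s) / Real.sinh (1 / Real.sqrt s) :=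
        (one_le_div hsh).mpr (by linarith)
      calc Real.sqrt s = Real.sqrt s * 1 := (mul_one _).symm
        _ ≤ PhiFB s := mul_le_mul_of_nonneg_left h2 ha.le
    · have hexp : Real.exp (-(1 / Real.sqrt s)) ≤ 1 := Real.exp_le_one_iff.mpr (by linarith)
      rw [← Real.cosh_sub_sinh] at hexp
      have h2 : 1 / Real.sqrt s ≤ Real.sinh (1 / Real.sqrt s) :=
        Real.self_le_sinh_iff.mpr hu0.le
      have h3 : Real.cosh (1 / Real.sqrt s) / Real.sinh (1 / Real.sqrt s) ≤ 1 + Real.sqrt s := by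
        rw [div_le_iff₀ hsh]
        have h4 : Real.sqrt s * (1 / Real.sqrt s) = 1 := by field_simp
        nlinarith [mul_le_mul_of_nonneg_left h2 (Real.sqrt_nonneg s)]
      have h5 := mul_le_mul_of_nonneg_left h3 (Real.sqrt_nonneg s)
      have h6 : Real.sqrt s * (1 + Real.sqrt s) = Real.sqrt s + s := by
        linear_combination ha2
      unfold PhiFB
      unfold PhiFB at h5
      linarith
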